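/- For nonnegative integers n, k with n ≤ 2^k, D(2^(k+2) + 2^(k+1) + n − 1) = 2^(k+1) − n + D(2^(k+1) + 2^k + n − 1). -/

import Mathlib

/-- f m = (#1 digits) - (#0 digits) in the binary expansion of m. -/
def f (m : ℕ) : ℤ :=
  2 * ((Nat.digits 2 m).count 1 : ℤ) - ((Nat.digits 2 m).length : ℤ)

/-- Cumulated deficient binary digit sum (OEIS A268289), D 0 = 0. -/
def D (n : ℕ) : ℤ := ∑ m ∈ Finset.Icc 1 n, f m

lemma f_two_mul (m : ℕ) (hm : m ≠ 0) : f (2 * m) = f m - 1 := by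
  unfold f
  rw [Nat.digits_def' (by norm_num) (by positivity)]
  rw [Nat.mul_mod_right, Nat.mul_div_cancel_left _ (by norm_num)]
  simp
  ring

lemma f_two_mul_add_one (m : ℕ) : f (2 * m + 1) = f m + 1 := by
  unfold f
  rw [Nat.digits_def' (by norm_num) (by positivity)]
  rw [Nat.mul_add_mod, Nat.mul_add_div (by norm_num)]
  norm_num
  ring

lemma f_key : ∀ k n : ℕ, n < 2 ^ k →
    f (2 ^ (k + 2) + 2 ^ (k + 1) + n) = f (2 ^ (k + 1) + 2 ^ k + n) - 1 := by
  intro k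
  induction k with
  | zero =>
      intro n hn
      interval_cases n
      norm_num [f, Nat.digits_def']
  | succ k ih =>
      intro n hn
      rcases Nat.even_or_odd n with ⟨m, hm⟩ | ⟨m, hm⟩
      · have hm' : m < 2 ^ k := by omega
        have e1 : 2 ^ (k + 1 + 2) + 2 ^ (k + 1 + 1) + n
            = 2 * (2 ^ (k + 2) + 2 ^ (k + 1) + m) := by ring_nf; omega
        have e2 : 2 ^ (k + 1 + 1) + 2 ^ (k + 1) + n
            = 2 * (2 ^ (k + 1) + 2 ^ k + m) := by ring_nf; omega
        rw [e1, e2, f_two_mul _ (by positivity), f_two_mul _ (by positivity), ih m hm']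
      · have hm' : m < 2 ^ k := by omega
        have e1 : 2 ^ (k + 1 + 2) + 2 ^ (k + 1 + 1) + n
            = 2 * (2 ^ (k + 2) + 2 ^ (k + 1) + m) + 1 := by ring_nf; omega
        have e2 : 2 ^ (k + 1 + 1) + 2 ^ (k + 1) + n
            = 2 * (2 ^ (k + 1) + 2 ^ k + m) + 1 := by ring_nf; omega
        rw [e1, e2, f_two_mul_add_one, f_two_mul_add_one, ih m hm']
        ring

lemma sum_double (a : ℕ) (ha : 1 ≤ a) : ∀ b : ℕ, a ≤ b →
    ∑ m ∈ Finset.Ico (2 * a) (2 * b), f m = 2 * ∑ m ∈ Finset.Ico a b, f m := by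
  intro b
  induction b with
  | zero => intro hb; exact absurd hb (by omega)
  | succ b ihb =>
      intro hb
      rcases Nat.lt_or_ge a (b + 1) with hab | hab
      · have hab' : a ≤ b := by omega
        have h1 : 2 * (b + 1) = (2 * b + 1) + 1 := by ring
        rw [h1, Finset.sum_Ico_succ_top (by omega), Finset.sum_Ico_succ_top (by omega),
          Finset.sum_Ico_succ_top hab', ihb hab', f_two_mul b (by omega),
          f_two_mul_add_one b]
        ring
      · have : a = b + 1 := by omega
        subst this; simp

lemma sum_block (k : ℕ) :
    ∑ m ∈ Finset.Ico (3 * 2 ^ k) (6 * 2 ^ k), f m = 2 ^ (k + 1) := by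
  induction k with
  | zero =>
      have h3 : Nat.digits 2 3 = [1, 1] := by simp [Nat.digits_def']
      have h4 : Nat.digits 2 4 = [0, 0, 1] := by simp [Nat.digits_def']
      have h5 : Nat.digits 2 5 = [1, 0, 1] := by simp [Nat.digits_def']
      have hI : Finset.Ico (3 * 2 ^ 0) (6 * 2 ^ 0) = {3, 4, 5} := by decide
      rw [hI]
      norm_num [f, h3, h4, h5]
  | succ k ih =>
      have e1 : 3 * 2 ^ (k + 1) = 2 * (3 * 2 ^ k) := by ring
      have e2 : 6 * 2 ^ (k + 1) = 2 * (6 * 2 ^ k) := by ring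
      rw [e1, e2, sum_double (3 * 2 ^ k) (Nat.one_le_iff_ne_zero.mpr (by positivity)) (6 * 2 ^ k) (by nlinarith [Nat.one_le_two_pow (n := k)]), ih]
      ring

lemma D_succ (m : ℕ) : D (m + 1) = D m + f (m + 1) := by
  unfold D
  rw [← Finset.Ico_add_one_right_eq_Icc, ← Finset.Ico_add_one_right_eq_Icc, Finset.sum_Ico_succ_top (by omega)]

lemma D_diff (a b : ℕ) (hab : a ≤ b) :
    D b - D a = ∑ m ∈ Finset.Ico (a + 1) (b + 1), f m := by
  unfold D
  rw [← Finset.Ico_add_one_right_eq_Icc, ← Finset.Ico_add_one_right_eq_Icc,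
    ← Finset.sum_Ico_consecutive f (by omega : 1 ≤ a + 1) (by omega : a + 1 ≤ b + 1)]
  ring

theorem stmt_12 (n k : ℕ) (h : n ≤ 2 ^ k) :
    D (2 ^ (k + 2) + 2 ^ (k + 1) + n - 1) = 2 ^ (k + 1) - n + D (2 ^ (k + 1) + 2 ^ k + n - 1) := by
  have hpos : 1 ≤ 2 ^ k := Nat.one_le_two_pow
  induction n with
  | zero =>
      have e1 : 2 ^ (k + 2) + 2 ^ (k + 1) + 0 - 1 + 1 = 6 * 2 ^ k := by ring_nf; omega
      have e2 : 2 ^ (k + 1) + 2 ^ k + 0 - 1 + 1 = 3 * 2 ^ k := by ring_nf; omega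
      have key := D_diff (2 ^ (k + 1) + 2 ^ k + 0 - 1) (2 ^ (k + 2) + 2 ^ (k + 1) + 0 - 1)
        (by ring_nf; omega)
      rw [e1, e2, sum_block k] at key
      push_cast
      linarith
  | succ n ih =>
      have hn : n < 2 ^ k := by omega
      have ih' := ih (by omega)
      have e1 : 2 ^ (k + 2) + 2 ^ (k + 1) + (n + 1) - 1
          = (2 ^ (k + 2) + 2 ^ (k + 1) + n - 1) + 1 := by ring_nf; omega
      have e2 : 2 ^ (k + 1) + 2 ^ k + (n + 1) - 1
          = (2 ^ (k + 1) + 2 ^ k + n - 1) + 1 := by ring_nf; omega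
      have e3 : 2 ^ (k + 2) + 2 ^ (k + 1) + n - 1 + 1 = 2 ^ (k + 2) + 2 ^ (k + 1) + n := by
        ring_nf; omega
      have e4 : 2 ^ (k + 1) + 2 ^ k + n - 1 + 1 = 2 ^ (k + 1) + 2 ^ k + n := by
        ring_nf; omega
      rw [e1, e2, D_succ, D_succ, e3, e4, f_key k n hn, ih']
      push_cast
      ring
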